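/- Let G be a simple graph with exactly 2k vertices of odd degree, and let P'_1, ..., P'_k be paths in G that are not pairwise edge-disjoint, such that every vertex of odd degree in G is an endpoint of some path P'_i. Then there exist pairwise edge-disjoint paths P_1, ..., P_k in G such that every vertex of odd degree in G is an endpoint of some path P_i, and the total number of edges of P_1, ..., P_k is strictly smaller than the total number of edges of P'_1, ..., P'_k. -/
import Mathlib

open SimpleGraph

section Aux

variable {V : Type*} {G : SimpleGraph V}

/-- Decompose a walk at an edge it contains. -/
lemma walk_decomp_of_mem_edges {a b : V} (P : G.Walk a b) {e : Sym2 V}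
    (he : e ∈ P.edges) :
    ∃ (x y : V) (_ : G.Adj x y) (A : G.Walk a x) (B : G.Walk y b),
      e = s(x, y) ∧ P.length = A.length + B.length + 1 := by
  induction P with
  | nil => simp at he
  | cons h q ih =>
    rw [SimpleGraph.Walk.edges_cons, List.mem_cons] at he
    rcases he with h' | h'
    · exact ⟨_, _, h, SimpleGraph.Walk.nil, q, h', by simp⟩
    · obtain ⟨x, y, hxy, A, B, he, hlen⟩ := ih h'
      exact ⟨x, y, hxy, SimpleGraph.Walk.cons h A, B, he, by
        simp [SimpleGraph.Walk.length_cons, hlen]; omega⟩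

variable [DecidableEq V]

/-- Replace the paths at indices `i ≠ j` by (the bypasses of) two walks whose total
length is at least 2 smaller, keeping all endpoints covered. -/
lemma replace_two {k : ℕ} (f : Fin k → Σ a b : V, G.Walk a b)
    (i j : Fin k) (hij : i ≠ j)
    {a c b d : V} (W1 : G.Walk a c) (W2 : G.Walk b d)
    (hlen : W1.length + W2.length + 2 ≤ (f i).2.2.length + (f j).2.2.length)
    (hpath : ∀ t, (f t).2.2.IsPath)
    (hend : ∀ w : V, (w = (f i).1 ∨ w = (f i).2.1 ∨ w = (f j).1 ∨ w = (f j).2.1) →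
      (w = a ∨ w = c ∨ w = b ∨ w = d)) :
    ∃ g : Fin k → Σ a b : V, G.Walk a b,
      (∀ t, (g t).2.2.IsPath) ∧
      (∀ w : V, (∃ t, w = (f t).1 ∨ w = (f t).2.1) → ∃ t, w = (g t).1 ∨ w = (g t).2.1) ∧
      (∑ t, (g t).2.2.length) < ∑ t, (f t).2.2.length := by
  classical
  set g := Function.update (Function.update f i ⟨a, c, W1.bypass⟩) j ⟨b, d, W2.bypass⟩ with hg
  have hgj : g j = ⟨b, d, W2.bypass⟩ := Function.update_self _ _ _
  have hgi : g i = ⟨a, c, W1.bypass⟩ := by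
    rw [hg, Function.update_of_ne hij, Function.update_self]
  have hgt : ∀ t, t ≠ i → t ≠ j → g t = f t := fun t h1 h2 => by
    rw [hg, Function.update_of_ne h2, Function.update_of_ne h1]
  refine ⟨g, ?_, ?_, ?_⟩
  · intro t
    by_cases h1 : t = j
    · subst h1; rw [hgj]; exact W2.bypass_isPath
    by_cases h2 : t = i
    · subst h2; rw [hgi]; exact W1.bypass_isPath
    · rw [hgt t h2 h1]; exact hpath t
  · rintro w ⟨t, hw⟩
    by_cases h1 : t = i
    · rw [h1] at hw
      rcases hend w (by tauto) with h | h | h | h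
      · exact ⟨i, by rw [hgi]; exact Or.inl h⟩
      · exact ⟨i, by rw [hgi]; exact Or.inr h⟩
      · exact ⟨j, by rw [hgj]; exact Or.inl h⟩
      · exact ⟨j, by rw [hgj]; exact Or.inr h⟩
    by_cases h2 : t = j
    · rw [h2] at hw
      rcases hend w (by tauto) with h | h | h | h
      · exact ⟨i, by rw [hgi]; exact Or.inl h⟩
      · exact ⟨i, by rw [hgi]; exact Or.inr h⟩
      · exact ⟨j, by rw [hgj]; exact Or.inl h⟩
      · exact ⟨j, by rw [hgj]; exact Or.inr h⟩
    · exact ⟨t, by rw [hgt t h1 h2]; exact hw⟩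
  · have hfun : (fun t => (g t).2.2.length) =
        Function.update (fun t => ((Function.update f i ⟨a, c, W1.bypass⟩) t).2.2.length)
          j W2.bypass.length := by
      funext t
      exact Function.apply_update (fun (_ : Fin k) (s : Σ a b : V, G.Walk a b) => s.2.2.length) _ j _ t
    have hfun2 : (fun t => ((Function.update f i (⟨a, c, W1.bypass⟩ : Σ a b : V, G.Walk a b)) t).2.2.length) =
        Function.update (fun t => (f t).2.2.length) i W1.bypass.length := by
      funext t
      exact Function.apply_update (fun (_ : Fin k) (s : Σ a b : V, G.Walk a b) => s.2.2.length) _ i _ t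
    have hji : i ∈ (Finset.univ : Finset (Fin k)) \ {j} := by
      simp [hij]
    have hsumg : ∑ t, (g t).2.2.length =
        W2.bypass.length + (W1.bypass.length +
          ∑ t ∈ ((Finset.univ : Finset (Fin k)) \ {j}) \ {i}, (f t).2.2.length) := by
      calc ∑ t, (g t).2.2.length
          = ∑ t, Function.update (fun t => ((Function.update f i
              (⟨a, c, W1.bypass⟩ : Σ a b : V, G.Walk a b)) t).2.2.length) j W2.bypass.length t := by
            rw [← hfun]
        _ = W2.bypass.length + ∑ t ∈ (Finset.univ : Finset (Fin k)) \ {j},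
              ((Function.update f i (⟨a, c, W1.bypass⟩ : Σ a b : V, G.Walk a b)) t).2.2.length :=
            Finset.sum_update_of_mem (Finset.mem_univ j) _ _
        _ = W2.bypass.length + ∑ t ∈ (Finset.univ : Finset (Fin k)) \ {j},
              Function.update (fun t => (f t).2.2.length) i W1.bypass.length t := by rw [hfun2]
        _ = W2.bypass.length + (W1.bypass.length +
              ∑ t ∈ ((Finset.univ : Finset (Fin k)) \ {j}) \ {i}, (f t).2.2.length) := by
            rw [Finset.sum_update_of_mem hji _ _]
    have hsumf : ∑ t, (f t).2.2.length =
        (f j).2.2.length + ((f i).2.2.length +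
          ∑ t ∈ ((Finset.univ : Finset (Fin k)) \ {j}) \ {i}, (f t).2.2.length) := by
      rw [Finset.sum_eq_add_sum_sdiff_singleton_of_mem (Finset.mem_univ j) (fun t => (f t).2.2.length),
        Finset.sum_eq_add_sum_sdiff_singleton_of_mem hji (fun t => (f t).2.2.length)]
    have hb1 : W1.bypass.length ≤ W1.length := SimpleGraph.Walk.length_bypass_le W1
    have hb2 : W2.bypass.length ≤ W2.length := SimpleGraph.Walk.length_bypass_le W2
    omega

/-- One swap step: if two paths share an edge, there is a covering family with strictly
smaller total length. -/
lemma swap_step {k : ℕ} (f : Fin k → Σ a b : V, G.Walk a b)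
    (hpath : ∀ t, (f t).2.2.IsPath)
    (i j : Fin k) (hij : i ≠ j) (e : Sym2 V)
    (hei : e ∈ (f i).2.2.edges) (hej : e ∈ (f j).2.2.edges) :
    ∃ g : Fin k → Σ a b : V, G.Walk a b,
      (∀ t, (g t).2.2.IsPath) ∧
      (∀ w : V, (∃ t, w = (f t).1 ∨ w = (f t).2.1) → ∃ t, w = (g t).1 ∨ w = (g t).2.1) ∧
      (∑ t, (g t).2.2.length) < ∑ t, (f t).2.2.length := by
  obtain ⟨x, y, hxy, A, B, he1, hL1⟩ := walk_decomp_of_mem_edges _ hei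
  obtain ⟨x', y', hxy', C, D, he2, hL2⟩ := walk_decomp_of_mem_edges _ hej
  have hs : (x = x' ∧ y = y') ∨ (x = y' ∧ y = x') := Sym2.eq_iff.mp (he1.symm.trans he2)
  rcases hs with ⟨hx, hy⟩ | ⟨hx, hy⟩
  · subst hx; subst hy
    refine replace_two f i j hij (A.append C.reverse) (B.reverse.append D) ?_ hpath ?_
    · simp only [SimpleGraph.Walk.length_append, SimpleGraph.Walk.length_reverse]
      omega
    · intro w hw; tauto
  · subst hx; subst hy
    refine replace_two f i j hij (A.append D) (C.append B) ?_ hpath ?_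
    · simp only [SimpleGraph.Walk.length_append]
      omega
    · intro w hw; tauto

lemma key_lemma {k : ℕ} : ∀ (N : ℕ) (f : Fin k → Σ a b : V, G.Walk a b),
    (∑ t, (f t).2.2.length) ≤ N →
    (∀ t, (f t).2.2.IsPath) →
    (∃ i j, i ≠ j ∧ ∃ e, e ∈ (f i).2.2.edges ∧ e ∈ (f j).2.2.edges) →
    ∃ g : Fin k → Σ a b : V, G.Walk a b,
      (∀ t, (g t).2.2.IsPath) ∧
      (∀ i j, i ≠ j → ∀ e, e ∈ (g i).2.2.edges → e ∉ (g j).2.2.edges) ∧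
      (∀ w : V, (∃ t, w = (f t).1 ∨ w = (f t).2.1) → ∃ t, w = (g t).1 ∨ w = (g t).2.1) ∧
      (∑ t, (g t).2.2.length) < ∑ t, (f t).2.2.length := by
  intro N
  induction N with
  | zero =>
    rintro f hN hpath ⟨i, j, hij, e, hei, hej⟩
    exfalso
    have h1 : (f i).2.2.length ≤ 0 :=
      le_trans (Finset.single_le_sum (f := fun t => (f t).2.2.length)
        (fun t _ => Nat.zero_le _) (Finset.mem_univ i)) hN
    have h2 : (f i).2.2.edges.length = 0 := by
      rw [SimpleGraph.Walk.length_edges]; omega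
    rw [List.length_eq_zero_iff] at h2
    rw [h2] at hei
    simp at hei
  | succ N ih =>
    rintro f hN hpath ⟨i, j, hij, e, hei, hej⟩
    obtain ⟨g, hg1, hgcov, hg3⟩ := swap_step f hpath i j hij e hei hej
    by_cases hd : ∀ i j, i ≠ j → ∀ e, e ∈ (g i).2.2.edges → e ∉ (g j).2.2.edges
    · exact ⟨g, hg1, hd, hgcov, hg3⟩
    · push_neg at hd
      obtain ⟨i', j', hij', e', he1', he2'⟩ := hd
      obtain ⟨g', h1, h2, h3, h4⟩ := ih g (by omega) hg1 ⟨i', j', hij', e', he1', he2'⟩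
      exact ⟨g', h1, h2, fun w hw => h3 w (hgcov w hw), lt_trans h4 hg3⟩

end Aux

/-- Let `G` be a simple graph with exactly `2k` vertices of odd degree, and
let `P'_1, …, P'_k` be paths in `G` that are NOT pairwise edge-disjoint, such that every
vertex of odd degree in `G` is an endpoint of some `P'_i`.  Then there exist pairwise
edge-disjoint paths `P_1, …, P_k` in `G` such that every vertex of odd degree in `G` is an
endpoint of some `P_i`, with strictly smaller total number of edges. -/
theorem shorter_edge_disjoint_paths_linking_odd_vertices
    {V : Type*} [Fintype V] [DecidableEq V] (G : SimpleGraph V) [DecidableRel G.Adj]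
    (k : ℕ)
    (hodd : (Finset.univ.filter fun v => Odd (G.degree v)).card = 2 * k)
    (u' v' : Fin k → V) (p' : ∀ i, G.Walk (u' i) (v' i))
    (hp' : ∀ i, (p' i).IsPath)
    (hnotdisj : ∃ i j, i ≠ j ∧ ∃ e, e ∈ (p' i).edges ∧ e ∈ (p' j).edges)
    (hcov' : ∀ w : V, Odd (G.degree w) → ∃ i, w = u' i ∨ w = v' i) :
    ∃ (u v : Fin k → V) (p : ∀ i, G.Walk (u i) (v i)),
      (∀ i, (p i).IsPath) ∧
      (∀ i j, i ≠ j → ∀ e, e ∈ (p i).edges → e ∉ (p j).edges) ∧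
      (∀ w : V, Odd (G.degree w) → ∃ i, w = u i ∨ w = v i) ∧
      (∑ i, (p i).length) < (∑ i, (p' i).length) := by
  classical
  set f : Fin k → Σ a b : V, G.Walk a b := fun t => ⟨u' t, v' t, p' t⟩ with hf
  obtain ⟨g, h1, h2, h3, h4⟩ := key_lemma (∑ t, (f t).2.2.length) f le_rfl
    (fun t => hp' t) hnotdisj
  exact ⟨fun t => (g t).1, fun t => (g t).2.1, fun t => (g t).2.2, h1, h2,
    fun w hw => h3 w (hcov' w hw), h4⟩
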